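/- Let n ≥ 1 be odd and let A be a finite set with k = |A| ≥ 2. Let the dihedral group D_n of order 2n act on ℤ/nℤ by: the rotation r^j sends x to x + j, and the reflection s·r^j sends x to j − x; let D_n act on colorings f : ℤ/nℤ → A by (g•f)(x) = f(g⁻¹•x). Then the number of orbits of colorings that are free (of cardinality 2n) equals (1/2)·Σ_{d∣n} μ(n/d)·((1/n)·k^d − k^{(d+1)/2}), where μ is the Möbius function (note every divisor d of odd n is odd, so (d+1)/2 is an integer). -/

import Mathlib

/-- The dihedral action on the vertices `ZMod n` of a regular `n`-gon: rotations
act by translation and the reflection `sr j = s·r^j` sends `x` to `j - x`. -/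
instance dihedralVertexAction (n : ℕ) : MulAction (DihedralGroup n) (ZMod n) where
  smul g x := match g with
    | DihedralGroup.r j => x - j
    | DihedralGroup.sr j => j - x
  one_smul x := by show x - 0 = x; rw [sub_zero]
  mul_smul a b x := by
    cases a with
    | r i =>
      cases b with
      | r j => show x - (i + j) = x - j - i; ring
      | sr j => show (j - i) - x = (j - x) - i; ring
    | sr i =>
      cases b with
      | r j => show (i + j) - x = i - (x - j); ring
      | sr j => show x - (j - i) = i - (j - x); ring

/-- The induced action on colorings `f : ZMod n → A`: `(g • f) x = f (g⁻¹ • x)`. -/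
instance dihedralColoringAction (n : ℕ) (A : Type*) :
    MulAction (DihedralGroup n) (ZMod n → A) where
  smul g f := fun x => f (g⁻¹ • x)
  one_smul f := by
    funext x; show f ((1 : DihedralGroup n)⁻¹ • x) = f x; rw [inv_one, one_smul]
  mul_smul a b f := by
    funext x; show f ((a * b)⁻¹ • x) = f (b⁻¹ • a⁻¹ • x)
    rw [mul_inv_rev, mul_smul]
set_option linter.unusedSectionVars false

namespace NgonAux

open MulAction

variable {n : ℕ} {A : Type*}

/-- Subgroup of periods of a coloring. -/
def perSub (f : ZMod n → A) : AddSubgroup (ZMod n) where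
  carrier := {j | ∀ x, f (x + j) = f x}
  zero_mem' := fun x => by rw [add_zero]
  add_mem' := by
    intro a b ha hb x
    rw [← add_assoc, hb, ha]
  neg_mem' := by
    intro a ha x
    have h := ha (x + -a)
    rw [neg_add_cancel_right] at h
    exact h.symm

/-- `f` is periodic with period `e : ℕ`. -/
def Per (f : ZMod n → A) (e : ℕ) : Prop := ((e : ZMod n)) ∈ perSub f

lemma per_def {f : ZMod n → A} {e : ℕ} (h : Per f e) (x : ZMod n) :
    f (x + (e : ZMod n)) = f x := h x

/-- `f` is symmetric under `x ↦ j - x`. -/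
def Refl (j : ZMod n) (f : ZMod n → A) : Prop := ∀ x, f (j - x) = f x

def Sym {q : ℕ} (f : ZMod q → A) : Prop := ∀ x, f (-x) = f x

lemma refl_zero_iff_sym {f : ZMod n → A} : Refl 0 f ↔ Sym f := by
  unfold Refl Sym; simp only [zero_sub]

lemma per_n [NeZero n] (f : ZMod n → A) : Per f n := by
  intro x; rw [ZMod.natCast_self, add_zero]

lemma per_of_dvd {f : ZMod n → A} {a b : ℕ} (ha : Per f a) (hab : a ∣ b) : Per f b := by
  obtain ⟨c, rfl⟩ := hab
  have : ((a * c : ℕ) : ZMod n) = c • ((a : ℕ) : ZMod n) := by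
    push_cast
    rw [nsmul_eq_mul, mul_comm]
  unfold Per
  rw [this]
  exact AddSubgroup.nsmul_mem _ ha _

lemma per_gcd {f : ZMod n → A} {a b : ℕ} (ha : Per f a) (hb : Per f b) :
    Per f (Nat.gcd a b) := by
  have key : ((Nat.gcd a b : ℕ) : ZMod n) =
      (Nat.gcdA a b) • ((a : ℕ) : ZMod n) + (Nat.gcdB a b) • ((b : ℕ) : ZMod n) := by
    have h := Nat.gcd_eq_gcd_ab a b
    have h2 := congrArg (fun z : ℤ => (z : ZMod n)) h
    push_cast at h2
    rw [zsmul_eq_mul, zsmul_eq_mul]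
    rw [h2]; ring
  unfold Per
  rw [key]
  exact AddSubgroup.add_mem _ (AddSubgroup.zsmul_mem _ ha _) (AddSubgroup.zsmul_mem _ hb _)

/-- The minimal positive period. -/
noncomputable def minPer (f : ZMod n → A) : ℕ := sInf {e | 0 < e ∧ Per f e}

variable [NeZero n]

lemma minPer_spec (f : ZMod n → A) : 0 < minPer f ∧ Per f (minPer f) := by
  have h : {e | 0 < e ∧ Per f e}.Nonempty :=
    ⟨n, Nat.pos_of_ne_zero (NeZero.ne n), per_n f⟩
  exact Nat.sInf_mem h

lemma minPer_pos (f : ZMod n → A) : 0 < minPer f := (minPer_spec f).1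
lemma minPer_per (f : ZMod n → A) : Per f (minPer f) := (minPer_spec f).2

lemma per_iff {f : ZMod n → A} {e : ℕ} : Per f e ↔ minPer f ∣ e := by
  constructor
  · intro h
    rcases Nat.eq_zero_or_pos e with he | he
    · simp [he]
    · have hg : Per f (Nat.gcd (minPer f) e) := per_gcd (minPer_per f) h
      have hgpos : 0 < Nat.gcd (minPer f) e := Nat.gcd_pos_of_pos_right _ he
      have h1 : minPer f ≤ Nat.gcd (minPer f) e := Nat.sInf_le ⟨hgpos, hg⟩
      have h2 : Nat.gcd (minPer f) e ≤ minPer f :=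
        Nat.le_of_dvd (minPer_pos f) (Nat.gcd_dvd_left _ _)
      have h3 : Nat.gcd (minPer f) e = minPer f := le_antisymm h2 h1
      rw [← h3]
      exact Nat.gcd_dvd_right _ _
  · intro h
    exact per_of_dvd (minPer_per f) h

lemma minPer_dvd (f : ZMod n → A) : minPer f ∣ n := per_iff.mp (per_n f)

lemma minPer_eq_n_iff {f : ZMod n → A} :
    minPer f = n ↔ ∀ j : ZMod n, j ∈ perSub f → j = 0 := by
  constructor
  · intro h j hj
    have hper : Per f j.val := by
      unfold Per
      rwa [ZMod.natCast_val, ZMod.cast_id]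
    have hd := per_iff.mp hper
    rw [h] at hd
    have hlt := ZMod.val_lt j
    have hv : j.val = 0 := Nat.eq_zero_of_dvd_of_lt hd hlt
    rwa [ZMod.val_eq_zero] at hv
  · intro h
    have h2 : ((minPer f : ℕ) : ZMod n) = 0 := h _ (minPer_per f)
    rw [ZMod.natCast_eq_zero_iff] at h2
    exact Nat.dvd_antisymm (minPer_dvd f) h2

section Counting

variable [Fintype A]

lemma nat_card_sigma {ι : Type*} [Fintype ι] (α : ι → Type*) [∀ i, Finite (α i)] :
    Nat.card (Sigma α) = ∑ i, Nat.card (α i) := by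
  letI : ∀ i, Fintype (α i) := fun i => Fintype.ofFinite _
  rw [Nat.card_eq_fintype_card, Fintype.card_sigma]
  exact Finset.sum_congr rfl fun i _ => (Nat.card_eq_fintype_card).symm

lemma castHom_surj {d : ℕ} [NeZero d] (hd : d ∣ n) :
    Function.Surjective (ZMod.castHom hd (ZMod d)) := by
  intro y
  refine ⟨((y.val : ℕ) : ZMod n), ?_⟩
  rw [map_natCast, ZMod.natCast_val, ZMod.cast_id]

lemma per_cast_val {d : ℕ} [NeZero d] (hd : d ∣ n) {f : ZMod n → A} (hf : Per f d)
    (x : ZMod n) : f (((ZMod.castHom hd (ZMod d) x).val : ℕ) : ZMod n) = f x := by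
  have hx : ((x.val : ℕ) : ZMod n) = x := by rw [ZMod.natCast_val, ZMod.cast_id]
  have h1 : (ZMod.castHom hd (ZMod d) x) = ((x.val : ℕ) : ZMod d) := by
    conv_lhs => rw [← hx]
    rw [map_natCast]
  rw [h1, ZMod.val_natCast]
  have hper : Per f (d * (x.val / d)) := per_of_dvd hf ⟨_, rfl⟩
  have h3 := per_def hper (((x.val % d : ℕ)) : ZMod n)
  rw [← Nat.cast_add] at h3
  rw [Nat.mod_add_div, hx] at h3
  exact h3.symm

/-- Counting periodic colorings. -/
lemma card_per {d : ℕ} (hd : d ∣ n) (hd0 : 0 < d) :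
    Nat.card {f : ZMod n → A // Per f d} = Fintype.card A ^ d := by
  haveI : NeZero d := ⟨hd0.ne'⟩
  have hper : ∀ g : ZMod d → A, Per (fun x => g (ZMod.castHom hd (ZMod d) x)) d := by
    intro g x
    show g (ZMod.castHom hd (ZMod d) (x + (d : ZMod n))) = _
    rw [map_add, map_natCast, ZMod.natCast_self, add_zero]
  have hbij : Function.Bijective
      (fun g : ZMod d → A => (⟨fun x => g (ZMod.castHom hd (ZMod d) x), hper g⟩ :
        {f : ZMod n → A // Per f d})) := by
    constructor
    · intro g₁ g₂ h
      have h' := congrArg Subtype.val h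
      funext y
      obtain ⟨x, rfl⟩ := castHom_surj hd y
      exact congrFun h' x
    · rintro ⟨f, hf⟩
      refine ⟨fun y => f ((y.val : ℕ) : ZMod n), ?_⟩
      apply Subtype.ext
      funext x
      exact per_cast_val hd hf x
  rw [← Nat.card_eq_of_bijective _ hbij, Nat.card_fun, Nat.card_eq_fintype_card,
    Nat.card_zmod]

/-- Counting symmetric colorings of `ZMod d`, `d` odd. -/
lemma card_sym_zmod {d m : ℕ} (hm : 2 * m = d + 1) (hd0 : 0 < d) :
    Nat.card {g : ZMod d → A // Sym g} = Fintype.card A ^ m := by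
  haveI : NeZero d := ⟨hd0.ne'⟩
  have hsym : ∀ h : Fin m → A, Sym (fun y : ZMod d =>
      if hy : y.val < m then h ⟨y.val, hy⟩
      else h ⟨d - y.val, by have := ZMod.val_lt y; omega⟩) := by
    intro h y
    dsimp only
    by_cases hy0 : y = 0
    · rw [hy0, neg_zero]
    · have hv : (-y).val = d - y.val := by rw [ZMod.neg_val, if_neg hy0]
      have hy0' : y.val ≠ 0 := fun hc => hy0 (by rwa [ZMod.val_eq_zero] at hc)
      have hylt : y.val < d := ZMod.val_lt y
      by_cases hy : y.val < m
      · have h1 : ¬ ((-y).val < m) := by rw [hv]; omega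
        rw [dif_neg h1, dif_pos hy]
        exact congrArg h (Fin.ext (show d - (-y).val = y.val by omega))
      · have h1 : (-y).val < m := by rw [hv]; omega
        rw [dif_pos h1, dif_neg hy]
        exact congrArg h (Fin.ext (show (-y).val = d - y.val by omega))
  have e : (Fin m → A) ≃ {g : ZMod d → A // Sym g} := by
    refine ⟨fun h => ⟨_, hsym h⟩, fun g i => g.1 ((i.val : ℕ) : ZMod d), ?_, ?_⟩
    · intro h
      funext i
      dsimp only
      have hival : ((i.val : ℕ) : ZMod d).val = i.val := by
        rw [ZMod.val_natCast, Nat.mod_eq_of_lt (by have := i.isLt; omega)]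
      rw [dif_pos (show ((i.val : ℕ) : ZMod d).val < m by rw [hival]; exact i.isLt)]
      exact congrArg h (Fin.ext hival)
    · rintro ⟨g, hg⟩
      apply Subtype.ext
      funext y
      dsimp only
      have hyy : ((y.val : ℕ) : ZMod d) = y := by rw [ZMod.natCast_val, ZMod.cast_id]
      by_cases hy : y.val < m
      · rw [dif_pos hy]
        exact congrArg g hyy
      · rw [dif_neg hy]
        show g (((d - y.val : ℕ)) : ZMod d) = g y
        have hsub : ((d - y.val : ℕ) : ZMod d) = -y := by
          rw [Nat.cast_sub (ZMod.val_lt y).le, ZMod.natCast_self, hyy, zero_sub]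
        rw [hsub]
        exact hg y
  rw [← Nat.card_congr e, Nat.card_fun, Nat.card_eq_fintype_card, Nat.card_eq_fintype_card,
    Fintype.card_fin]

/-- Counting periodic symmetric colorings. -/
lemma card_per_sym {d m : ℕ} (hd : d ∣ n) (hd0 : 0 < d) (hm : 2 * m = d + 1) :
    Nat.card {f : ZMod n → A // Per f d ∧ Sym f} = Fintype.card A ^ m := by
  haveI : NeZero d := ⟨hd0.ne'⟩
  rw [← card_sym_zmod (A := A) hm hd0]
  apply Nat.card_congr
  apply Equiv.symm
  have hper : ∀ g : {g : ZMod d → A // Sym g},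
      Per (fun x => g.1 (ZMod.castHom hd (ZMod d) x)) d ∧
      Sym (fun x => g.1 (ZMod.castHom hd (ZMod d) x)) := by
    rintro ⟨g, hg⟩
    constructor
    · intro x
      show g (ZMod.castHom hd (ZMod d) (x + (d : ZMod n))) = _
      rw [map_add, map_natCast, ZMod.natCast_self, add_zero]
    · intro x
      show g (ZMod.castHom hd (ZMod d) (-x)) = _
      rw [map_neg]
      exact hg _
  apply Equiv.ofBijective
    (fun g => (⟨fun x => g.1 (ZMod.castHom hd (ZMod d) x), hper g⟩ :
      {f : ZMod n → A // Per f d ∧ Sym f}))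
  constructor
  · intro g₁ g₂ h
    have h' := congrArg Subtype.val h
    apply Subtype.ext
    funext y
    obtain ⟨x, rfl⟩ := castHom_surj hd y
    exact congrFun h' x
  · rintro ⟨f, hf, hsymf⟩
    have key : ∀ x, f (((ZMod.castHom hd (ZMod d) x).val : ℕ) : ZMod n) = f x :=
      per_cast_val hd hf
    have hgsym : Sym (fun y : ZMod d => f ((y.val : ℕ) : ZMod n)) := by
      intro y
      obtain ⟨x, rfl⟩ := castHom_surj hd y
      show f (((-(ZMod.castHom hd (ZMod d) x)).val : ℕ) : ZMod n) =
        f (((ZMod.castHom hd (ZMod d) x).val : ℕ) : ZMod n)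
      rw [← map_neg, key, key]
      exact hsymf x
    refine ⟨⟨fun y => f ((y.val : ℕ) : ZMod n), hgsym⟩, ?_⟩
    apply Subtype.ext
    funext x
    exact key x

/-- Decomposition by exact minimal period. -/
lemma card_per_eq_sum (Q : (ZMod n → A) → Prop) {d : ℕ} (hd : d ∣ n) (hd0 : 0 < d) :
    Nat.card {f : ZMod n → A // Per f d ∧ Q f} =
      ∑ e ∈ d.divisors, Nat.card {f : ZMod n → A // minPer f = e ∧ Q f} := by
  classical
  have hbij : Function.Bijective
      (fun p : (Σ e : {e // e ∈ d.divisors}, {f : ZMod n → A // minPer f = e.1 ∧ Q f}) =>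
        (⟨p.2.1, per_iff.mpr (by rw [p.2.2.1]; exact Nat.dvd_of_mem_divisors p.1.2),
          p.2.2.2⟩ :
          {f : ZMod n → A // Per f d ∧ Q f})) := by
    constructor
    · rintro ⟨⟨e₁, he₁⟩, f₁, hf₁, hq₁⟩ ⟨⟨e₂, he₂⟩, f₂, hf₂, hq₂⟩ h
      have hf : f₁ = f₂ := congrArg Subtype.val h
      subst hf
      have he : e₁ = e₂ := hf₁.symm.trans hf₂
      subst he
      rfl
    · rintro ⟨f, hf, hq⟩
      exact ⟨⟨⟨minPer f, Nat.mem_divisors.mpr ⟨per_iff.mp hf, hd0.ne'⟩⟩, f, rfl, hq⟩, rfl⟩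
  rw [← Nat.card_eq_of_bijective _ hbij, nat_card_sigma]
  exact Finset.sum_coe_sort d.divisors (fun e => Nat.card {f : ZMod n → A // minPer f = e ∧ Q f})

end Counting

end NgonAux
namespace NgonAux

open MulAction

set_option linter.unusedSectionVars false

variable {n : ℕ} {A : Type*}

/-- Translation of a coloring. -/
def T (c : ZMod n) (f : ZMod n → A) : ZMod n → A := fun x => f (x + c)

lemma T_T (c : ZMod n) (f : ZMod n → A) : T (-c) (T c f) = f := by
  funext x
  show f (x + -c + c) = f x
  rw [show x + -c + c = x by ring]

lemma T_T' (c : ZMod n) (f : ZMod n → A) : T c (T (-c) f) = f := by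
  funext x
  show f (x + c + -c) = f x
  rw [show x + c + -c = x by ring]

lemma perSub_T (c : ZMod n) (f : ZMod n → A) : perSub (T c f) = perSub f := by
  ext j
  constructor
  · intro h y
    have h2 := h (y - c)
    have h2' : f (y - c + j + c) = f (y - c + c) := h2
    rw [show y - c + j + c = y + j by ring, show y - c + c = y by ring] at h2'
    exact h2'
  · intro h x
    show f (x + j + c) = f (x + c)
    rw [show x + j + c = (x + c) + j by ring]
    exact h (x + c)

lemma minPer_T (c : ZMod n) (f : ZMod n → A) : minPer (T c f) = minPer f := by
  unfold minPer
  congr 1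
  ext e
  show 0 < e ∧ ((e : ZMod n)) ∈ perSub (T c f) ↔ 0 < e ∧ ((e : ZMod n)) ∈ perSub f
  rw [perSub_T]

lemma refl_T_iff (i c : ZMod n) (f : ZMod n → A) :
    Refl i (T c f) ↔ Refl (i + 2 * c) f := by
  constructor
  · intro h y
    have h2 := h (y - c)
    have h2' : f (i - (y - c) + c) = f (y - c + c) := h2
    rw [show i - (y - c) + c = i + 2 * c - y by ring, show y - c + c = y by ring] at h2'
    exact h2'
  · intro h x
    show f (i - x + c) = f (x + c)
    rw [show i - x + c = (i + 2 * c) - (x + c) by ring]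
    exact h (x + c)

/-- Uniqueness of the reflection axis for a coloring with full minimal period. -/
lemma refl_unique [NeZero n] {f : ZMod n → A} (hf : minPer f = n) {j j' : ZMod n}
    (h : Refl j f) (h' : Refl j' f) : j = j' := by
  have hmem : j' - j ∈ perSub f := by
    intro x
    have h1 := h' (j - x)
    rw [show j' - (j - x) = x + (j' - j) by ring] at h1
    rw [h1]
    exact h x
  have h0 := minPer_eq_n_iff.mp hf _ hmem
  exact (sub_eq_zero.mp h0).symm

variable [NeZero n] [Fintype A]

lemma card_refl_j (hodd : Odd n) (j : ZMod n) :
    Nat.card {f : ZMod n → A // minPer f = n ∧ Refl j f} =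
      Nat.card {f : ZMod n → A // minPer f = n ∧ Refl 0 f} := by
  have hco : Nat.Coprime 2 n := Nat.coprime_two_left.mpr hodd
  have hu : IsUnit (2 : ZMod n) := by
    have h2 := (ZMod.isUnit_iff_coprime 2 n).mpr hco
    simpa using h2
  obtain ⟨u, hu2⟩ := hu
  set c : ZMod n := ↑u⁻¹ * j with hc
  have hinv : (2 : ZMod n) * ↑u⁻¹ = 1 := by rw [← hu2]; exact u.mul_inv
  have hcj : 2 * c = j := by rw [hc, ← mul_assoc, hinv, one_mul]
  apply Nat.card_congr
  refine ⟨fun p => ⟨T c p.1, by rw [minPer_T]; exact p.2.1,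
      (refl_T_iff 0 c p.1).mpr (by rw [zero_add, hcj]; exact p.2.2)⟩,
    fun p => ⟨T (-c) p.1, by rw [minPer_T]; exact p.2.1,
      (refl_T_iff j (-c) p.1).mpr
        (by rw [show j + 2 * (-c) = j - 2 * c by ring, hcj, sub_self]; exact p.2.2)⟩,
    fun p => Subtype.ext (T_T c p.1), fun p => Subtype.ext (T_T' c p.1)⟩

lemma card_exists_refl (hodd : Odd n) :
    Nat.card {f : ZMod n → A // minPer f = n ∧ ∃ j, Refl j f} =
      n * Nat.card {f : ZMod n → A // minPer f = n ∧ Refl 0 f} := by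
  classical
  have hbij : Function.Bijective
      (fun p : (Σ j : ZMod n, {f : ZMod n → A // minPer f = n ∧ Refl j f}) =>
        (⟨p.2.1, p.2.2.1, p.1, p.2.2.2⟩ :
          {f : ZMod n → A // minPer f = n ∧ ∃ j, Refl j f})) := by
    constructor
    · rintro ⟨j₁, f₁, hp₁, hr₁⟩ ⟨j₂, f₂, hp₂, hr₂⟩ h
      have hf : f₁ = f₂ := congrArg Subtype.val h
      subst hf
      have hj : j₁ = j₂ := refl_unique hp₁ hr₁ hr₂
      subst hj
      rfl
    · rintro ⟨f, hp, j, hr⟩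
      exact ⟨⟨j, f, hp, hr⟩, rfl⟩
  rw [← Nat.card_eq_of_bijective _ hbij, nat_card_sigma]
  rw [Finset.sum_congr rfl (fun j _ => card_refl_j hodd j), Finset.sum_const,
    Finset.card_univ, ZMod.card, smul_eq_mul]

/-! ### Stabilizers -/

lemma r_smul (j : ZMod n) (f : ZMod n → A) (x : ZMod n) :
    (DihedralGroup.r j • f) x = f (x + j) := by
  show f (x - -j) = f (x + j)
  rw [sub_neg_eq_add]

lemma sr_smul (j : ZMod n) (f : ZMod n → A) (x : ZMod n) :
    (DihedralGroup.sr j • f) x = f (j - x) := rfl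

lemma stab_eq_bot_iff (f : ZMod n → A) :
    stabilizer (DihedralGroup n) f = ⊥ ↔ (minPer f = n ∧ ∀ j, ¬ Refl j f) := by
  constructor
  · intro h
    constructor
    · rw [minPer_eq_n_iff]
      intro j hj
      have hmem : DihedralGroup.r j ∈ stabilizer (DihedralGroup n) f := by
        rw [mem_stabilizer_iff]
        funext x
        rw [r_smul]
        exact hj x
      rw [h, Subgroup.mem_bot] at hmem
      have : DihedralGroup.r j = DihedralGroup.r 0 := hmem
      exact DihedralGroup.r.inj this
    · intro j hr
      have hmem : DihedralGroup.sr j ∈ stabilizer (DihedralGroup n) f := by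
        rw [mem_stabilizer_iff]
        funext x
        rw [sr_smul]
        exact hr x
      rw [h, Subgroup.mem_bot] at hmem
      exact absurd hmem (by rw [DihedralGroup.one_def]; intro hc; cases hc)
  · rintro ⟨hper, hrefl⟩
    rw [Subgroup.eq_bot_iff_forall]
    intro g hg
    rw [mem_stabilizer_iff] at hg
    cases g with
    | r j =>
      have hj : j ∈ perSub f := by
        intro x
        have := congrFun hg x
        rwa [r_smul] at this
      have := minPer_eq_n_iff.mp hper j hj
      rw [this]
      rfl
    | sr j =>
      exact absurd (fun x => by have := congrFun hg x; rwa [sr_smul] at this)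
        (hrefl j)

lemma card_orbit_iff (f : ZMod n → A) :
    Nat.card (MulAction.orbit (DihedralGroup n) f) = 2 * n ↔
      (minPer f = n ∧ ∀ j, ¬ Refl j f) := by
  classical
  have horb := MulAction.card_orbit_mul_card_stabilizer_eq_card_group (DihedralGroup n) f
  rw [DihedralGroup.card] at horb
  rw [← stab_eq_bot_iff]
  rw [← Subgroup.card_eq_one]
  have hn : 0 < 2 * n := by have := Nat.pos_of_ne_zero (NeZero.ne n); omega
  rw [Nat.card_eq_fintype_card, Nat.card_eq_fintype_card]
  constructor
  · intro h
    rw [h] at horb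
    nlinarith [Fintype.card_pos_iff.mpr (inferInstance : Nonempty (stabilizer (DihedralGroup n) f))]
  · intro h
    rw [h, mul_one] at horb
    exact horb

lemma card_free_orbits_mul :
    Nat.card {ω : MulAction.orbitRel.Quotient (DihedralGroup n) (ZMod n → A) //
        Nat.card ω.orbit = 2 * n} * (2 * n) =
      Nat.card {f : ZMod n → A // minPer f = n ∧ ∀ j, ¬ Refl j f} := by
  classical
  have hbij : Function.Bijective
      (fun p : (Σ ω : {ω : MulAction.orbitRel.Quotient (DihedralGroup n) (ZMod n → A) //
          Nat.card ω.orbit = 2 * n}, ω.1.orbit) =>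
        (⟨p.2.1, by
          have hm := MulAction.orbitRel.Quotient.mem_orbit.mp p.2.2
          have h2 := p.1.2
          rw [← hm, MulAction.orbitRel.Quotient.orbit_mk] at h2
          exact (card_orbit_iff _).mp h2⟩ :
          {f : ZMod n → A // minPer f = n ∧ ∀ j, ¬ Refl j f})) := by
    constructor
    · rintro ⟨⟨ω₁, hω₁⟩, a₁, ha₁⟩ ⟨⟨ω₂, hω₂⟩, a₂, ha₂⟩ h
      have ha : a₁ = a₂ := congrArg Subtype.val h
      subst ha
      have hω : ω₁ = ω₂ :=
        (MulAction.orbitRel.Quotient.mem_orbit.mp ha₁).symm.trans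
          (MulAction.orbitRel.Quotient.mem_orbit.mp ha₂)
      subst hω
      rfl
    · rintro ⟨f, hf⟩
      refine ⟨⟨⟨Quotient.mk'' f, ?_⟩, ⟨f, MulAction.orbitRel.Quotient.mem_orbit.mpr rfl⟩⟩, rfl⟩
      rw [MulAction.orbitRel.Quotient.orbit_mk]
      exact (card_orbit_iff f).mpr hf
  rw [← Nat.card_eq_of_bijective _ hbij]
  letI : Fintype {ω : MulAction.orbitRel.Quotient (DihedralGroup n) (ZMod n → A) //
      Nat.card ω.orbit = 2 * n} := Fintype.ofFinite _
  rw [nat_card_sigma]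
  rw [Finset.sum_congr rfl (fun ω _ => ω.2), Finset.sum_const, Finset.card_univ,
    smul_eq_mul, Nat.card_eq_fintype_card]

lemma nat_card_split {α : Type*} [Finite α] (p q : α → Prop) :
    Nat.card {x // p x} =
      Nat.card {x // p x ∧ q x} + Nat.card {x // p x ∧ ¬ q x} := by
  classical
  rw [← Nat.card_congr (Equiv.subtypeSubtypeEquivSubtypeInter p q),
    ← Nat.card_congr (Equiv.subtypeSubtypeEquivSubtypeInter p (fun x => ¬ q x)),
    ← Nat.card_sum]
  exact Nat.card_congr (Equiv.sumCompl (fun x : {x // p x} => q x.1)).symm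

end NgonAux
open NgonAux in
/-- For odd `n ≥ 1`, the number of free orbits (orbits of
cardinality `2n`, i.e. primitive colorings up to symmetry) of the dihedral
group `D_n` acting on colorings of the vertices of a regular `n`-gon with
`k = |A| ≥ 2` colors is `(1/2) ∑_{d ∣ n} μ(n/d) ((1/n) k^d - k^{(d+1)/2})`. -/
theorem card_free_orbits_ngon_odd (n : ℕ) (hn : 1 ≤ n) (hodd : Odd n)
    (A : Type*) [Fintype A] (hA : 2 ≤ Fintype.card A) :
    (Nat.card {ω : MulAction.orbitRel.Quotient (DihedralGroup n) (ZMod n → A) //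
        Nat.card ω.orbit = 2 * n} : ℚ) =
      (1 / 2) * ∑ d ∈ n.divisors, (ArithmeticFunction.moebius (n / d) : ℚ) *
        ((1 / (n : ℚ)) * (Fintype.card A : ℚ) ^ d -
          (Fintype.card A : ℚ) ^ ((d + 1) / 2)) := by
  classical
  haveI : NeZero n := ⟨by omega⟩
  have hn0 : (n : ℚ) ≠ 0 := Nat.cast_ne_zero.mpr (by omega)
  -- the two basic counting functions
  have hNsum : ∀ d > 0, d ∈ {m | m ∣ n} →
      ∑ e ∈ d.divisors, (Nat.card {f : ZMod n → A // minPer f = e} : ℚ) =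
        (Fintype.card A : ℚ) ^ d := by
    intro d hd0 hdn
    have h1 := card_per_eq_sum (n := n) (A := A) (fun _ => True) hdn hd0
    have h2 := card_per (n := n) (A := A) hdn hd0
    have h3 : Nat.card {f : ZMod n → A // Per f d ∧ True} =
        Nat.card {f : ZMod n → A // Per f d} :=
      Nat.card_congr (Equiv.subtypeEquivRight (by simp))
    have h4 : ∀ e, Nat.card {f : ZMod n → A // minPer f = e ∧ True} =
        Nat.card {f : ZMod n → A // minPer f = e} := fun e =>
      Nat.card_congr (Equiv.subtypeEquivRight (by simp))
    have h6 : (∑ e ∈ d.divisors, Nat.card {f : ZMod n → A // minPer f = e}) =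
        Fintype.card A ^ d := by
      rw [← Finset.sum_congr rfl (fun e _ => h4 e), ← h1, h3, h2]
    exact_mod_cast congrArg (Nat.cast : ℕ → ℚ) h6
  have hMsum : ∀ d > 0, d ∈ {m | m ∣ n} →
      ∑ e ∈ d.divisors,
          (Nat.card {f : ZMod n → A // minPer f = e ∧ Refl 0 f} : ℚ) =
        (Fintype.card A : ℚ) ^ ((d + 1) / 2) := by
    intro d hd0 hdn
    have hddvd : d ∣ n := hdn
    have hdodd : Odd d := by
      rcases Nat.even_or_odd d with he | ho
      · exfalso
        have h2d : (2 : ℕ) ∣ n := he.two_dvd.trans hddvd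
        have hodd' := Nat.odd_iff.mp hodd
        omega
      · exact ho
    obtain ⟨t, ht⟩ := hdodd
    have hm : 2 * ((d + 1) / 2) = d + 1 := by omega
    have h1 := card_per_eq_sum (n := n) (A := A) (fun f => Refl 0 f) hddvd hd0
    have h2 := card_per_sym (n := n) (A := A) hddvd hd0 hm
    have h3 : Nat.card {f : ZMod n → A // Per f d ∧ Refl 0 f} =
        Nat.card {f : ZMod n → A // Per f d ∧ Sym f} :=
      Nat.card_congr (Equiv.subtypeEquivRight (fun f => by
        rw [and_congr_right_iff]
        exact fun _ => refl_zero_iff_sym))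
    have h6 : (∑ e ∈ d.divisors,
        Nat.card {f : ZMod n → A // minPer f = e ∧ Refl 0 f}) =
        Fintype.card A ^ ((d + 1) / 2) := by
      rw [← h1, h3, h2]
    exact_mod_cast congrArg (Nat.cast : ℕ → ℚ) h6
  -- Möbius inversion
  have hs : ∀ (m₁ m₂ : ℕ), m₁ ∣ m₂ → m₂ ∈ {m | m ∣ n} → m₁ ∈ {m | m ∣ n} :=
    fun a b hab hb => hab.trans hb
  have hN := (ArithmeticFunction.sum_eq_iff_sum_mul_moebius_eq_on
    (f := fun e => (Nat.card {f : ZMod n → A // minPer f = e} : ℚ))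
    (g := fun d => (Fintype.card A : ℚ) ^ d) {m | m ∣ n} hs).mp hNsum n (by omega)
    (dvd_refl n)
  have hM := (ArithmeticFunction.sum_eq_iff_sum_mul_moebius_eq_on
    (f := fun e => (Nat.card {f : ZMod n → A // minPer f = e ∧ Refl 0 f} : ℚ))
    (g := fun d => (Fintype.card A : ℚ) ^ ((d + 1) / 2)) {m | m ∣ n} hs).mp hMsum n
    (by omega) (dvd_refl n)
  rw [Nat.sum_divisorsAntidiagonal'
    (f := fun a b => (ArithmeticFunction.moebius a : ℚ) * (Fintype.card A : ℚ) ^ b)] at hN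
  rw [Nat.sum_divisorsAntidiagonal'
    (f := fun a b => (ArithmeticFunction.moebius a : ℚ) *
      (Fintype.card A : ℚ) ^ ((b + 1) / 2))] at hM
  -- orbit counting
  have horb := card_free_orbits_mul (n := n) (A := A)
  have hsplit := nat_card_split (α := ZMod n → A)
    (fun f => minPer f = n) (fun f => ∃ j, Refl j f)
  have hex := card_exists_refl (n := n) (A := A) hodd
  have hneg : Nat.card {f : ZMod n → A // minPer f = n ∧ ∀ j, ¬ Refl j f} =
      Nat.card {f : ZMod n → A // minPer f = n ∧ ¬ ∃ j, Refl j f} :=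
    Nat.card_congr (Equiv.subtypeEquivRight (fun f => by
      rw [and_congr_right_iff]
      exact fun _ => (not_exists).symm))
  have key : (Nat.card {ω : MulAction.orbitRel.Quotient (DihedralGroup n)
        (ZMod n → A) // Nat.card ω.orbit = 2 * n} : ℚ) * (2 * (n : ℚ)) =
      (Nat.card {f : ZMod n → A // minPer f = n} : ℚ) -
        (n : ℚ) * (Nat.card {f : ZMod n → A // minPer f = n ∧ Refl 0 f} : ℚ) := by
    have e1 := congrArg (Nat.cast : ℕ → ℚ) horb
    have e2 := congrArg (Nat.cast : ℕ → ℚ) hsplit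
    have e3 := congrArg (Nat.cast : ℕ → ℚ) hex
    have e4 := congrArg (Nat.cast : ℕ → ℚ) hneg
    push_cast at e1 e2 e3 e4
    rw [e1, e4]
    rw [e3] at e2
    linarith
  have h2n : (2 * (n : ℚ)) ≠ 0 := by
    intro h
    apply hn0
    have : (2 : ℚ) ≠ 0 := two_ne_zero
    field_simp at h
    exact (mul_eq_zero.mp h).resolve_left this
  apply mul_right_cancel₀ h2n
  rw [key, ← hN, ← hM]
  rw [Finset.mul_sum, ← Finset.sum_sub_distrib, Finset.mul_sum, Finset.sum_mul]
  apply Finset.sum_congr rfl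
  intro d hd
  field_simp
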